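/- Let n ≥ 1 and l, a, b ≥ 0 be integers with 2l ≤ a + b − 1. Let f, g : ℝⁿ → ℂ be measurable functions with ⟨x⟩^{max(2l, a−1)} f ∈ L¹(ℝⁿ) and ⟨x⟩^{max(2l, b−1)} g ∈ L¹(ℝⁿ). If ∫_{ℝⁿ} x^α f(x) dx = 0 for every multi-index α with |α| ≤ a−1, and ∫_{ℝⁿ} x^β g(x) dx = 0 for every multi-index β with |β| ≤ b−1, then ∫_{ℝⁿ}∫_{ℝⁿ} |x−y|^{2l} f(x) g(y) dx dy = 0 (the double integral being absolutely convergent). -/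

import Mathlib

open MeasureTheory Complex

private def mcoef : ℕ → ℂ := fun m => if m = 1 then -2 else 1

private def expA {l n : ℕ} (p : Fin l → Fin n) (q : Fin l → ℕ) (i : Fin n) : ℕ :=
  ∑ k ∈ Finset.univ.filter (fun k => p k = i), q k

private def expB {l n : ℕ} (p : Fin l → Fin n) (q : Fin l → ℕ) (i : Fin n) : ℕ :=
  ∑ k ∈ Finset.univ.filter (fun k => p k = i), (2 - q k)

private lemma fiber_prod_pow {l n : ℕ} (p : Fin l → Fin n) (e : Fin l → ℕ) (w : Fin n → ℂ) :
    ∏ k, w (p k) ^ e k = ∏ i, w i ^ (∑ k ∈ Finset.univ.filter (fun k => p k = i), e k) := by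
  rw [← Finset.prod_fiberwise_of_maps_to (fun k _ => Finset.mem_univ (p k)) (fun k => w (p k) ^ e k)]
  refine Finset.prod_congr rfl fun i _ => ?_
  rw [← Finset.prod_pow_eq_pow_sum]
  exact Finset.prod_congr rfl fun k hk => by rw [(Finset.mem_filter.mp hk).2]

private lemma sq_expand (X Y : ℂ) :
    (X - Y) ^ 2 = ∑ m ∈ Finset.range 3, mcoef m * X ^ m * Y ^ (2 - m) := by
  simp [mcoef, Finset.sum_range_succ]; ring

private lemma norm_pow_expand {n : ℕ} (l : ℕ) (x y : EuclideanSpace ℝ (Fin n)) :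
    ((‖x - y‖ ^ (2 * l) : ℝ) : ℂ)
      = ∑ p : Fin l → Fin n, ∑ q ∈ Fintype.piFinset (fun _ : Fin l => Finset.range 3),
          (∏ k, mcoef (q k)) *
            ((∏ i, (x i : ℂ) ^ expA p q i) * (∏ i, (y i : ℂ) ^ expB p q i)) := by
  have h1 : ‖x - y‖ ^ (2 * l) = (∑ i, (x i - y i) ^ 2) ^ l := by
    rw [pow_mul]
    congr 1
    rw [EuclideanSpace.norm_eq, Real.sq_sqrt (Finset.sum_nonneg fun i _ => sq_nonneg _)]
    refine Finset.sum_congr rfl fun i _ => ?_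
    rw [Real.norm_eq_abs, _root_.sq_abs]
    simp [PiLp.sub_apply]
  have h2 : ((‖x - y‖ ^ (2 * l) : ℝ) : ℂ) = (∑ i, ((x i : ℂ) - (y i : ℂ)) ^ 2) ^ l := by
    rw [h1]; push_cast; ring
  rw [h2]
  have h3 : (∑ i, ((x i : ℂ) - (y i : ℂ)) ^ 2) ^ l
      = ∏ _k : Fin l, ∑ i, ((x i : ℂ) - (y i : ℂ)) ^ 2 := by
    simp [Finset.prod_const]
  rw [h3, Finset.prod_univ_sum (fun _ => (Finset.univ : Finset (Fin n)))
    (fun _ i => ((x i : ℂ) - (y i : ℂ)) ^ 2), Fintype.piFinset_univ]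
  refine Finset.sum_congr rfl fun p _ => ?_
  calc ∏ k, ((x (p k) : ℂ) - (y (p k) : ℂ)) ^ 2
      = ∏ k, ∑ m ∈ Finset.range 3, mcoef m * (x (p k) : ℂ) ^ m * (y (p k) : ℂ) ^ (2 - m) :=
        Finset.prod_congr rfl fun k _ => sq_expand _ _
    _ = ∑ q ∈ Fintype.piFinset (fun _ : Fin l => Finset.range 3),
          ∏ k, mcoef (q k) * (x (p k) : ℂ) ^ q k * (y (p k) : ℂ) ^ (2 - q k) :=
        Finset.prod_univ_sum _ _
    _ = _ := by
        refine Finset.sum_congr rfl fun q _ => ?_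
        rw [Finset.prod_mul_distrib, Finset.prod_mul_distrib,
          fiber_prod_pow p q (fun i => (x i : ℂ)),
          fiber_prod_pow p (fun k => 2 - q k) (fun i => (y i : ℂ)), mul_assoc]
        rfl

private lemma abs_apply_le {n : ℕ} (x : EuclideanSpace ℝ (Fin n)) (i : Fin n) : |x i| ≤ ‖x‖ := by
  rw [EuclideanSpace.norm_eq]
  have h1 : |x i| = Real.sqrt (‖x i‖ ^ 2) := by
    rw [Real.sqrt_sq_eq_abs, Real.norm_eq_abs, _root_.abs_abs]
  rw [h1]
  exact Real.sqrt_le_sqrt (Finset.single_le_sum (fun j _ => sq_nonneg ‖x j‖) (Finset.mem_univ i))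

private lemma one_le_jb {n : ℕ} (x : EuclideanSpace ℝ (Fin n)) :
    1 ≤ Real.sqrt (1 + ‖x‖ ^ 2) := by
  calc (1 : ℝ) = Real.sqrt 1 := Real.sqrt_one.symm
    _ ≤ _ := Real.sqrt_le_sqrt (by nlinarith [sq_nonneg ‖x‖])

private lemma norm_le_jb {n : ℕ} (x : EuclideanSpace ℝ (Fin n)) :
    ‖x‖ ≤ Real.sqrt (1 + ‖x‖ ^ 2) := by
  have : ‖x‖ = Real.sqrt (‖x‖ ^ 2) := (Real.sqrt_sq (norm_nonneg x)).symm
  nlinarith [Real.sqrt_le_sqrt (show ‖x‖ ^ 2 ≤ 1 + ‖x‖ ^ 2 by linarith)]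

private lemma monomial_bound {n : ℕ} (α : Fin n → ℕ) (M : ℕ) (hα : ∑ i, α i ≤ M)
    (x : EuclideanSpace ℝ (Fin n)) :
    ‖∏ i, (x i : ℂ) ^ α i‖ ≤ Real.sqrt (1 + ‖x‖ ^ 2) ^ M := by
  set s := Real.sqrt (1 + ‖x‖ ^ 2) with hs
  have hs1 : 1 ≤ s := one_le_jb x
  calc ‖∏ i, (x i : ℂ) ^ α i‖ = ∏ i, |x i| ^ α i := by
        rw [norm_prod]
        exact Finset.prod_congr rfl fun i _ => by
          rw [norm_pow, Complex.norm_real, Real.norm_eq_abs]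
    _ ≤ ∏ i, s ^ α i := by
        refine Finset.prod_le_prod (fun i _ => by positivity) (fun i _ => ?_)
        exact pow_le_pow_left₀ (abs_nonneg _) ((abs_apply_le x i).trans (norm_le_jb x)) _
    _ = s ^ (∑ i, α i) := Finset.prod_pow_eq_pow_sum _ _ _
    _ ≤ s ^ M := pow_le_pow_right₀ hs1 hα

private lemma integrable_monomial {n M : ℕ} {f : EuclideanSpace ℝ (Fin n) → ℂ}
    (hfm : Measurable f)
    (hf : Integrable (fun x => (Real.sqrt (1 + ‖x‖ ^ 2) ^ M) • f x))
    (α : Fin n → ℕ) (hα : ∑ i, α i ≤ M) :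
    Integrable (fun x => (∏ i, (x i : ℂ) ^ α i) * f x) := by
  refine Integrable.mono' hf.norm ?_ ?_
  · exact ((Finset.measurable_prod Finset.univ fun i _ =>
      ((Complex.measurable_ofReal.comp ((measurable_pi_apply i).comp (WithLp.measurable_ofLp 2 _))).pow_const _)).mul
      hfm).aestronglyMeasurable
  · filter_upwards with x
    have h0 : (0 : ℝ) ≤ Real.sqrt (1 + ‖x‖ ^ 2) := Real.sqrt_nonneg _
    rw [norm_mul, norm_smul, Real.norm_eq_abs, _root_.abs_of_nonneg (pow_nonneg h0 _)]
    exact mul_le_mul_of_nonneg_right (monomial_bound α M hα x) (norm_nonneg _)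

/-- Orthogonality lemma (Lemma 5.1): if `f` has vanishing moments of order
    `< a`, `g` has vanishing moments of order `< b`, and `2l ≤ a + b - 1`,
    then `∫∫ |x-y|^{2l} f(x) g(y) dx dy = 0`. -/
theorem vanishing_moments_orthogonality
    (n l a b : ℕ) (hn : 1 ≤ n) (hlab : 2 * l + 1 ≤ a + b)
    (f g : EuclideanSpace ℝ (Fin n) → ℂ)
    (hfm : Measurable f) (hgm : Measurable g)
    (hf : Integrable (fun x : EuclideanSpace ℝ (Fin n) =>
      (Real.sqrt (1 + ‖x‖^2) ^ (max (2 * l) (a - 1))) • f x))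
    (hg : Integrable (fun x : EuclideanSpace ℝ (Fin n) =>
      (Real.sqrt (1 + ‖x‖^2) ^ (max (2 * l) (b - 1))) • g x))
    (hfmom : ∀ α : Fin n → ℕ, (∑ i, α i) + 1 ≤ a →
      ∫ x : EuclideanSpace ℝ (Fin n), (∏ i, (x i : ℂ) ^ α i) * f x = 0)
    (hgmom : ∀ β : Fin n → ℕ, (∑ i, β i) + 1 ≤ b →
      ∫ x : EuclideanSpace ℝ (Fin n), (∏ i, (x i : ℂ) ^ β i) * g x = 0) :
    Integrable (fun p : EuclideanSpace ℝ (Fin n) × EuclideanSpace ℝ (Fin n) =>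
      ‖p.1 - p.2‖ ^ (2 * l) * ‖f p.1‖ * ‖g p.2‖) ∧
    ∫ p : EuclideanSpace ℝ (Fin n) × EuclideanSpace ℝ (Fin n),
      ((‖p.1 - p.2‖ ^ (2 * l) : ℝ) : ℂ) * f p.1 * g p.2 = 0 := by
  set s : EuclideanSpace ℝ (Fin n) → ℝ := fun x => Real.sqrt (1 + ‖x‖ ^ 2) with hsdef
  have hsmeas : Measurable s :=
    (Real.continuous_sqrt.comp (continuous_const.add ((continuous_norm (E := EuclideanSpace ℝ (Fin n))).pow 2))).measurable
  -- integrability of ⟨x⟩^{2l}‖f x‖ and ⟨y⟩^{2l}‖g y‖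
  have hF : ∀ (M : ℕ) (h : EuclideanSpace ℝ (Fin n) → ℂ), Measurable h → 2 * l ≤ M →
      Integrable (fun x : EuclideanSpace ℝ (Fin n) => (Real.sqrt (1 + ‖x‖ ^ 2) ^ M) • h x) →
      Integrable (fun x : EuclideanSpace ℝ (Fin n) => s x ^ (2 * l) * ‖h x‖) := by
    intro M h hm hM hint
    refine Integrable.mono' hint.norm
      (((hsmeas.pow_const _).mul hm.norm).aestronglyMeasurable) ?_
    filter_upwards with x
    have h0 : (0 : ℝ) ≤ s x := Real.sqrt_nonneg _
    have h1 : (1 : ℝ) ≤ s x := one_le_jb x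
    rw [Real.norm_eq_abs, _root_.abs_of_nonneg (by positivity), norm_smul, Real.norm_eq_abs,
      _root_.abs_of_nonneg (pow_nonneg h0 _)]
    exact mul_le_mul_of_nonneg_right (pow_le_pow_right₀ h1 hM) (norm_nonneg _)
  have hFf := hF _ f hfm (le_max_left _ _) hf
  have hFg := hF _ g hgm (le_max_left _ _) hg
  -- pointwise bound
  have hptbd : ∀ x y : EuclideanSpace ℝ (Fin n), ‖x - y‖ ^ (2 * l) ≤ 2 ^ (2 * l) * (s x ^ (2 * l) * s y ^ (2 * l)) := by
    intro x y
    have hxy : ‖x - y‖ ≤ 2 * (s x * s y) := by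
      have h1 := norm_sub_le x y
      have h2 := norm_le_jb x
      have h3 := norm_le_jb y
      have h4 := one_le_jb x
      have h5 := one_le_jb y
      nlinarith [mul_nonneg (sub_nonneg.mpr h4) (sub_nonneg.mpr h5)]
    calc ‖x - y‖ ^ (2 * l) ≤ (2 * (s x * s y)) ^ (2 * l) :=
          pow_le_pow_left₀ (norm_nonneg _) hxy _
      _ = 2 ^ (2 * l) * (s x ^ (2 * l) * s y ^ (2 * l)) := by rw [mul_pow, mul_pow]
  -- Part 1
  have hint1 : Integrable (fun p : EuclideanSpace ℝ (Fin n) × EuclideanSpace ℝ (Fin n) => ‖p.1 - p.2‖ ^ (2 * l) * ‖f p.1‖ * ‖g p.2‖) := by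
    have hbd : Integrable (fun p : EuclideanSpace ℝ (Fin n) × EuclideanSpace ℝ (Fin n) =>
        (2 : ℝ) ^ (2 * l) * ((s p.1 ^ (2 * l) * ‖f p.1‖) * (s p.2 ^ (2 * l) * ‖g p.2‖))) := by
      rw [Measure.volume_eq_prod]
      exact (hFf.mul_prod hFg).const_mul _
    refine Integrable.mono' hbd ?_ ?_
    · exact ((((continuous_fst.sub continuous_snd).norm.pow _).measurable.mul
        (hfm.norm.comp measurable_fst)).mul (hgm.norm.comp measurable_snd)).aestronglyMeasurable
    · filter_upwards with p
      have h0 : (0 : ℝ) ≤ ‖p.1 - p.2‖ ^ (2 * l) * ‖f p.1‖ * ‖g p.2‖ := by positivity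
      rw [Real.norm_eq_abs, _root_.abs_of_nonneg h0]
      calc ‖p.1 - p.2‖ ^ (2 * l) * ‖f p.1‖ * ‖g p.2‖
          ≤ 2 ^ (2 * l) * (s p.1 ^ (2 * l) * s p.2 ^ (2 * l)) * ‖f p.1‖ * ‖g p.2‖ :=
            mul_le_mul_of_nonneg_right
              (mul_le_mul_of_nonneg_right (hptbd p.1 p.2) (norm_nonneg _)) (norm_nonneg _)
        _ = (2 : ℝ) ^ (2 * l) * ((s p.1 ^ (2 * l) * ‖f p.1‖) * (s p.2 ^ (2 * l) * ‖g p.2‖)) := by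
            ring
  refine ⟨hint1, ?_⟩
  -- Part 2
  classical
  set Q : Finset (Fin l → ℕ) := Fintype.piFinset (fun _ : Fin l => Finset.range 3) with hQ
  set T : (Fin l → Fin n) → (Fin l → ℕ) → EuclideanSpace ℝ (Fin n) × EuclideanSpace ℝ (Fin n) → ℂ := fun p q z =>
    (∏ k, mcoef (q k)) *
      (((∏ i, (z.1 i : ℂ) ^ expA p q i) * f z.1) * ((∏ i, (z.2 i : ℂ) ^ expB p q i) * g z.2))
    with hT
  have hKeq : (fun p : EuclideanSpace ℝ (Fin n) × EuclideanSpace ℝ (Fin n) => ((‖p.1 - p.2‖ ^ (2 * l) : ℝ) : ℂ) * f p.1 * g p.2)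
      = fun z : EuclideanSpace ℝ (Fin n) × EuclideanSpace ℝ (Fin n) => ∑ p : Fin l → Fin n, ∑ q ∈ Q, T p q z := by
    funext z
    rw [norm_pow_expand l z.1 z.2, Finset.sum_mul, Finset.sum_mul]
    refine Finset.sum_congr rfl fun p _ => ?_
    rw [Finset.sum_mul, Finset.sum_mul]
    refine Finset.sum_congr rfl fun q _ => ?_
    rw [hT]; ring
  -- degree facts
  have hdeg : ∀ (p : Fin l → Fin n), ∀ q ∈ Q,
      (∑ i, expA p q i) ≤ 2 * l ∧ (∑ i, expB p q i) ≤ 2 * l ∧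
      (∑ i, expA p q i) + (∑ i, expB p q i) ≤ 2 * l := by
    intro p q hq
    have hq3 : ∀ k, q k < 3 := fun k => by
      have := (Fintype.mem_piFinset.mp hq) k
      simpa [Finset.mem_range] using this
    have e1 : ∑ i, expA p q i = ∑ k, q k := by
      simp only [expA]; exact Finset.sum_fiberwise _ _ _
    have e2 : ∑ i, expB p q i = ∑ k, (2 - q k) := by
      simp only [expB]; exact Finset.sum_fiberwise _ _ _
    have e3 : (∑ k, q k) + (∑ k, (2 - q k)) ≤ 2 * l := by
      rw [← Finset.sum_add_distrib]
      calc ∑ k : Fin l, (q k + (2 - q k)) ≤ ∑ _k : Fin l, 2 :=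
            Finset.sum_le_sum fun k _ => by have := hq3 k; omega
        _ = 2 * l := by simp [Finset.sum_const, mul_comm]
    omega
  -- integrability of each term
  have hTint : ∀ (p : Fin l → Fin n), ∀ q ∈ Q, Integrable (T p q) := by
    intro p q hq
    obtain ⟨hA, hB, -⟩ := hdeg p q hq
    have h1 := integrable_monomial hfm hf (expA p q) (hA.trans (le_max_left _ _))
    have h2 := integrable_monomial hgm hg (expB p q) (hB.trans (le_max_left _ _))
    rw [hT]
    have : Integrable (fun z : EuclideanSpace ℝ (Fin n) × EuclideanSpace ℝ (Fin n) =>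
        ((∏ i, (z.1 i : ℂ) ^ expA p q i) * f z.1) * ((∏ i, (z.2 i : ℂ) ^ expB p q i) * g z.2)) := by
      rw [Measure.volume_eq_prod]; exact h1.mul_prod h2
    exact this.const_mul _
  -- each term integrates to zero
  have hTzero : ∀ (p : Fin l → Fin n), ∀ q ∈ Q, ∫ z : EuclideanSpace ℝ (Fin n) × EuclideanSpace ℝ (Fin n), T p q z = 0 := by
    intro p q hq
    obtain ⟨-, -, hAB⟩ := hdeg p q hq
    have hfact : ∫ z : EuclideanSpace ℝ (Fin n) × EuclideanSpace ℝ (Fin n), T p q z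
        = (∏ k, mcoef (q k)) * ((∫ x : EuclideanSpace ℝ (Fin n), (∏ i, (x i : ℂ) ^ expA p q i) * f x) *
            (∫ y : EuclideanSpace ℝ (Fin n), (∏ i, (y i : ℂ) ^ expB p q i) * g y)) := by
      rw [hT]
      simp only []
      rw [MeasureTheory.integral_const_mul, Measure.volume_eq_prod,
        integral_prod_mul (fun x : EuclideanSpace ℝ (Fin n) => (∏ i, (x i : ℂ) ^ expA p q i) * f x)
          (fun y : EuclideanSpace ℝ (Fin n) => (∏ i, (y i : ℂ) ^ expB p q i) * g y)]
    rw [hfact]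
    by_cases hca : (∑ i, expA p q i) + 1 ≤ a
    · rw [hfmom _ hca]; ring
    · have hcb : (∑ i, expB p q i) + 1 ≤ b := by omega
      rw [hgmom _ hcb]; ring
  rw [hKeq, integral_finset_sum _ (fun p _ => integrable_finset_sum _ (fun q hq => hTint p q hq))]
  refine Finset.sum_eq_zero fun p _ => ?_
  rw [integral_finset_sum _ (fun q hq => hTint p q hq)]
  exact Finset.sum_eq_zero fun q hq => hTzero p q hq
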